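/- arXiv:2302.03514 — 3 statements merged into one kernel-verified Lean document; each statement's English description precedes it below -/
import Mathlib

section
/- (Theorem A, invariance of the action.) Suppose (v,τ) is an r-critical point for some r ∈ [0,1]. Then for every r' ∈ [0,1] one has A_{r'}(v,τ) = −∫ v*λ; in particular the restriction of A_{r'} to the (common) critical set is independent of r'. -/
noncomputable section

/-- The standard complex structure on `ℝ^{2n} ≅ ℝ^n × ℝ^n`, `J(x,y) = (−y,x)`. -/
def Jmap (n : ℕ) (z : EuclideanSpace ℝ (Fin n ⊕ Fin n)) :
    EuclideanSpace ℝ (Fin n ⊕ Fin n) :=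
  WithLp.toLp 2 (Sum.elim (fun j => -z (Sum.inr j)) (fun j => z (Sum.inl j)))

/-- The standard Liouville one-form on `ℝ^{2n}`: `λ_z(w) = ½⟨Jz, w⟩`. -/
def lform (n : ℕ) (z w : EuclideanSpace ℝ (Fin n ⊕ Fin n)) : ℝ :=
  (1 / 2) * (inner ℝ (Jmap n z) w : ℝ)

variable (m : ℕ) (n : Fin m → ℕ)

/-- `H(z) = (H_1(z_1), …, H_m(z_m)) ∈ ℝ^m` evaluated along the loop `v` at time `t`. -/
def Hloop (H : ∀ i, EuclideanSpace ℝ (Fin (n i) ⊕ Fin (n i)) → ℝ)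
    (v : ∀ i, ℝ → EuclideanSpace ℝ (Fin (n i) ⊕ Fin (n i))) (t : ℝ) :
    EuclideanSpace ℝ (Fin m) :=
  WithLp.toLp 2 (fun i => H i (v i t))

/-- The averaged vector `H̄(v) = ∫₀¹ H(v(t)) dt ∈ ℝ^m`. -/
def Hbar (H : ∀ i, EuclideanSpace ℝ (Fin (n i) ⊕ Fin (n i)) → ℝ)
    (v : ∀ i, ℝ → EuclideanSpace ℝ (Fin (n i) ⊕ Fin (n i))) :
    EuclideanSpace ℝ (Fin m) :=
  WithLp.toLp 2 (fun i => ∫ t in (0:ℝ)..1, H i (v i t))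

/-- The `i`-th partial derivative `f_i = ∂f/∂x_i`. -/
def partialD (f : EuclideanSpace ℝ (Fin m) → ℝ) (i : Fin m)
    (x : EuclideanSpace ℝ (Fin m)) : ℝ :=
  fderiv ℝ f x (EuclideanSpace.single i 1)

/-- The area functional `∫ v*λ = Σ_i ∫₀¹ λ_{v_i(t)}(v_i'(t)) dt`. -/
def area (v : ∀ i, ℝ → EuclideanSpace ℝ (Fin (n i) ⊕ Fin (n i))) : ℝ :=
  ∑ i, ∫ t in (0:ℝ)..1, lform (n i) (v i t) (deriv (v i) t)

/-- The interpolated Rabinowitz action functional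
`A_r(v,τ) = −∫ v*λ + τ( r·f(H̄(v)) + (1−r)·∫₀¹ f(H(v(t))) dt )`. -/
def actionR (H : ∀ i, EuclideanSpace ℝ (Fin (n i) ⊕ Fin (n i)) → ℝ)
    (f : EuclideanSpace ℝ (Fin m) → ℝ) (r : ℝ)
    (v : ∀ i, ℝ → EuclideanSpace ℝ (Fin (n i) ⊕ Fin (n i))) (τ : ℝ) : ℝ :=
  -(area m n v)
    + τ * (r * f (Hbar m n H v) + (1 - r) * (∫ t in (0:ℝ)..1, f (Hloop m n H v t)))

/-- `(v, τ)` is an `r`-critical point of `A_r`. -/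
def IsCritPt (H : ∀ i, EuclideanSpace ℝ (Fin (n i) ⊕ Fin (n i)) → ℝ)
    (f : EuclideanSpace ℝ (Fin m) → ℝ) (r : ℝ)
    (v : ∀ i, ℝ → EuclideanSpace ℝ (Fin (n i) ⊕ Fin (n i))) (τ : ℝ) : Prop :=
  (∀ (i : Fin m) (t : ℝ),
      deriv (v i) t =
        (τ * (r * partialD m f i (Hbar m n H v)
            + (1 - r) * partialD m f i (Hloop m n H v t))) •
          Jmap (n i) (gradient (H i) (v i t))) ∧
    r * f (Hbar m n H v) + (1 - r) * (∫ t in (0:ℝ)..1, f (Hloop m n H v t)) = 0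

lemma inner_Jmap_self (k : ℕ) (z : EuclideanSpace ℝ (Fin k ⊕ Fin k)) :
    (inner ℝ z (Jmap k z) : ℝ) = 0 := by
  simp only [PiLp.inner_apply, RCLike.inner_apply, starRingEnd_apply, star_trivial,
    Fintype.sum_sum_type, Jmap, PiLp.toLp_apply, Sum.elim_inl, Sum.elim_inr]
  rw [← Finset.sum_add_distrib]
  simp [mul_comm]

lemma inner_gradient_eq (g : EuclideanSpace ℝ (Fin k ⊕ Fin k) → ℝ)
    (x w : EuclideanSpace ℝ (Fin k ⊕ Fin k)) :
    (inner ℝ (gradient g x) w : ℝ) = fderiv ℝ g x w := by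
  rw [gradient, InnerProductSpace.toDual_symm_apply]

/-- Theorem A (invariance of the action): if `(v,τ)` is an `r`-critical point for
some `r ∈ [0,1]`, then for every `r' ∈ [0,1]` one has `A_{r'}(v,τ) = −∫ v*λ`;
in particular the restriction of `A_{r'}` to the common critical set is
independent of `r'`. -/
theorem action_independent_of_r_on_crit (hm : 1 ≤ m) (hn : ∀ i, 1 ≤ n i)
    (H : ∀ i, EuclideanSpace ℝ (Fin (n i) ⊕ Fin (n i)) → ℝ)
    (hH : ∀ i, ContDiff ℝ 1 (H i))
    (f : EuclideanSpace ℝ (Fin m) → ℝ) (hf : ContDiff ℝ 1 f)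
    (v : ∀ i, ℝ → EuclideanSpace ℝ (Fin (n i) ⊕ Fin (n i)))
    (hv : ∀ i, ContDiff ℝ 1 (v i))
    (hper : ∀ (i : Fin m) (t : ℝ), v i (t + 1) = v i t) (τ : ℝ)
    (r : ℝ) (hr : r ∈ Set.Icc (0:ℝ) 1) (hcrit : IsCritPt m n H f r v τ) :
    ∀ r' ∈ Set.Icc (0:ℝ) 1, actionR m n H f r' v τ = -(area m n v) := by
  -- Step 1: each `H i ∘ v i` is constant in time.
  have hconst : ∀ (i : Fin m) (t : ℝ), H i (v i t) = H i (v i 0) := by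
    intro i t
    have hdiff : Differentiable ℝ (fun s => H i (v i s)) :=
      ((hH i).differentiable one_ne_zero).comp ((hv i).differentiable one_ne_zero)
    refine is_const_of_deriv_eq_zero hdiff (fun s => ?_) t 0
    have hV : HasDerivAt (v i) (deriv (v i) s) s :=
      ((hv i).differentiable one_ne_zero s).hasDerivAt
    have hC : HasDerivAt (fun u => H i (v i u))
        (fderiv ℝ (H i) (v i s) (deriv (v i) s)) s :=
      (((hH i).differentiable one_ne_zero (v i s)).hasFDerivAt).comp_hasDerivAt s hV
    rw [hC.deriv]
    rw [← inner_gradient_eq, hcrit.1 i s, inner_smul_right, inner_Jmap_self, mul_zero]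
  -- Step 2: `Hloop` is constant and equal to `Hbar`.
  have hloop : ∀ t, Hloop m n H v t = Hloop m n H v 0 := by
    intro t; ext i; exact hconst i t
  have hbar : Hbar m n H v = Hloop m n H v 0 := by
    ext i
    simp only [Hbar, Hloop, PiLp.toLp_apply]
    rw [intervalIntegral.integral_congr (g := fun _ => H i (v i 0))
      (fun s _ => hconst i s)]
    simp
  -- Step 3: the integral of `f ∘ Hloop` is `f (Hbar)`.
  have hint : (∫ t in (0:ℝ)..1, f (Hloop m n H v t)) = f (Hbar m n H v) := by
    rw [intervalIntegral.integral_congr (g := fun _ => f (Hloop m n H v 0))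
      (fun s _ => by rw [hloop s]), hbar]
    simp
  -- Step 4: the constraint gives `f (Hbar) = 0`.
  have hf0 : f (Hbar m n H v) = 0 := by
    have h := hcrit.2
    rw [hint] at h
    linarith
  intro r' _
  rw [actionR, hint, hf0]
  ring
end
end

section
/- (Step 1a estimate of the fundamental lemma, abstracted.) Let N ≥ 1, κ > 0, L > 0, τ, μ ∈ ℝ. Let v : ℝ → ℝ^N be a C¹ loop, let Λ : ℝ → (ℝ^N →L ℝ) (continuous linear functionals) be continuous, and let X : ℝ → ℝ^N be continuous, such that for all t ∈ [0,1]: Λ(t)(X(t)) ≥ κ/2, ‖Λ(t)‖ ≤ L (operator norm), and |μ| ≤ κ/3. Then | −∫₀¹ Λ(t)(v'(t)) dt + τ·μ | ≥ (κ/6)·|τ| − L·( ∫₀¹ ‖v'(t) − τ·X(t)‖² dt )^{1/2}. -/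
noncomputable section

open MeasureTheory

/-- Cauchy–Schwarz: `∫₀¹ g ≤ √(∫₀¹ g²)` for continuous nonnegative `g`. -/
lemma aux_cs (g : ℝ → ℝ) (hg : Continuous g) (hg0 : ∀ t, 0 ≤ g t) :
    (∫ t in (0:ℝ)..1, g t) ≤ Real.sqrt (∫ t in (0:ℝ)..1, g t ^ 2) := by
  rw [intervalIntegral.integral_of_le zero_le_one,
      intervalIntegral.integral_of_le zero_le_one]
  set ν := volume.restrict (Set.Ioc (0:ℝ) 1) with hν
  have hfin : IsFiniteMeasure ν := ⟨by simp [hν, Real.volume_Ioc]⟩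
  have hpq : (2:ℝ).HolderConjugate 2 := Real.holderConjugate_iff.mpr ⟨one_lt_two, by norm_num⟩
  obtain ⟨x, hx, hmax⟩ := isCompact_Icc.exists_isMaxOn (Set.nonempty_Icc.2 zero_le_one)
    (hg.norm.continuousOn : ContinuousOn (fun t => ‖g t‖) (Set.Icc (0:ℝ) 1))
  have hmem : MemLp g (ENNReal.ofReal 2) ν := by
    refine MemLp.of_bound hg.aestronglyMeasurable ‖g x‖ ?_
    rw [hν, ae_restrict_iff' measurableSet_Ioc]
    exact ae_of_all _ fun t ht => hmax (Set.Ioc_subset_Icc_self ht)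
  have key := integral_mul_le_Lp_mul_Lq_of_nonneg (μ := ν) hpq
    (f := g) (g := fun _ => (1:ℝ)) (ae_of_all _ hg0)
    (ae_of_all _ fun _ => zero_le_one) hmem (memLp_const 1)
  simp only [mul_one, Real.one_rpow] at key
  have hν1 : ∫ _ : ℝ, (1:ℝ) ∂ν = 1 := by
    simp [hν, Real.volume_Ioc]
  rw [hν1, Real.one_rpow, mul_one] at key
  have hrw : ∀ a : ℝ, g a ^ (2:ℝ) = g a ^ 2 := fun a => by
    rw [show ((2:ℝ) = ((2:ℕ):ℝ)) by norm_num, Real.rpow_natCast]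
  simp only [hrw] at key
  calc ∫ t, g t ∂ν ≤ (∫ t, g t ^ 2 ∂ν) ^ ((1:ℝ)/2) := key
    _ = Real.sqrt (∫ t, g t ^ 2 ∂ν) := (Real.sqrt_eq_rpow _).symm

/-- Step 1a estimate of the fundamental lemma, abstracted: for a `C¹` loop `v`,
a continuous family of linear functionals `Λ` with `Λ(t)(X(t)) ≥ κ/2` and
`‖Λ(t)‖ ≤ L` on `[0,1]`, and `|μ| ≤ κ/3`, the quantity
`|−∫₀¹ Λ(t)(v'(t)) dt + τ·μ|` is bounded below by
`(κ/6)·|τ| − L·(∫₀¹ ‖v'(t) − τ·X(t)‖² dt)^{1/2}`. -/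
theorem step1a_abstract (N : ℕ) (hN : 1 ≤ N) (κ L τ μ : ℝ)
    (hκ : 0 < κ) (hL : 0 < L)
    (v : ℝ → EuclideanSpace ℝ (Fin N)) (hv : ContDiff ℝ 1 v)
    (hper : ∀ t : ℝ, v (t + 1) = v t)
    (Λ : ℝ → (EuclideanSpace ℝ (Fin N) →L[ℝ] ℝ)) (hΛ : Continuous Λ)
    (X : ℝ → EuclideanSpace ℝ (Fin N)) (hX : Continuous X)
    (hΛX : ∀ t ∈ Set.Icc (0:ℝ) 1, κ / 2 ≤ Λ t (X t))
    (hΛL : ∀ t ∈ Set.Icc (0:ℝ) 1, ‖Λ t‖ ≤ L)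
    (hμ : |μ| ≤ κ / 3) :
    |-(∫ t in (0:ℝ)..1, Λ t (deriv v t)) + τ * μ| ≥
      (κ / 6) * |τ|
        - L * Real.sqrt (∫ t in (0:ℝ)..1, ‖deriv v t - τ • X t‖ ^ 2) := by
  have hD : Continuous (deriv v) := hv.continuous_deriv le_rfl
  set g : ℝ → EuclideanSpace ℝ (Fin N) := fun t => deriv v t - τ • X t with hg
  have hgc : Continuous g := hD.sub (hX.const_smul τ)
  have cΛg : Continuous fun t => Λ t (g t) := hΛ.clm_apply hgc
  have cΛX : Continuous fun t => Λ t (X t) := hΛ.clm_apply hX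
  have cΛD : Continuous fun t => Λ t (deriv v t) := hΛ.clm_apply hD
  -- split the integral
  have hsplit : (∫ t in (0:ℝ)..1, Λ t (deriv v t))
      = (∫ t in (0:ℝ)..1, Λ t (g t)) + τ * ∫ t in (0:ℝ)..1, Λ t (X t) := by
    rw [← intervalIntegral.integral_const_mul, ← intervalIntegral.integral_add (f := fun t => Λ t (g t)) (g := fun t => τ * Λ t (X t))
      (cΛg.intervalIntegrable 0 1) ((continuous_const.mul cΛX).intervalIntegrable 0 1)]
    refine intervalIntegral.integral_congr fun t _ => ?_
    simp only [hg, map_sub, ContinuousLinearMap.map_smul, smul_eq_mul]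
    ring
  set I1 := ∫ t in (0:ℝ)..1, Λ t (g t) with hI1
  set I2 := ∫ t in (0:ℝ)..1, Λ t (X t) with hI2
  -- lower bound for I2
  have hI2lb : κ / 2 ≤ I2 := by
    have := intervalIntegral.integral_mono_on (a := (0:ℝ)) (b := 1) zero_le_one
      (intervalIntegrable_const (μ := volume) (c := κ/2)) (cΛX.intervalIntegrable 0 1) hΛX
    simpa using this
  -- bound for |I1|
  have hI1ub : |I1| ≤ L * Real.sqrt (∫ t in (0:ℝ)..1, ‖g t‖ ^ 2) := by
    have h1 : |I1| ≤ ∫ t in (0:ℝ)..1, |Λ t (g t)| :=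
      intervalIntegral.abs_integral_le_integral_abs zero_le_one
    have h2 : (∫ t in (0:ℝ)..1, |Λ t (g t)|) ≤ ∫ t in (0:ℝ)..1, L * ‖g t‖ := by
      refine intervalIntegral.integral_mono_on zero_le_one (cΛg.abs.intervalIntegrable 0 1)
        ((continuous_const.mul hgc.norm).intervalIntegrable 0 1) fun t ht => ?_
      calc |Λ t (g t)| = ‖Λ t (g t)‖ := rfl
        _ ≤ ‖Λ t‖ * ‖g t‖ := (Λ t).le_opNorm _
        _ ≤ L * ‖g t‖ := mul_le_mul_of_nonneg_right (hΛL t ht) (norm_nonneg _)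
    have h3 : (∫ t in (0:ℝ)..1, L * ‖g t‖) = L * ∫ t in (0:ℝ)..1, ‖g t‖ :=
      intervalIntegral.integral_const_mul _ _
    have h4 : (∫ t in (0:ℝ)..1, ‖g t‖) ≤ Real.sqrt (∫ t in (0:ℝ)..1, ‖g t‖ ^ 2) :=
      aux_cs _ hgc.norm fun t => norm_nonneg _
    calc |I1| ≤ ∫ t in (0:ℝ)..1, |Λ t (g t)| := h1
      _ ≤ ∫ t in (0:ℝ)..1, L * ‖g t‖ := h2
      _ = L * ∫ t in (0:ℝ)..1, ‖g t‖ := h3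
      _ ≤ L * Real.sqrt (∫ t in (0:ℝ)..1, ‖g t‖ ^ 2) := by
          exact mul_le_mul_of_nonneg_left h4 hL.le
  -- combine
  rw [hsplit]
  have habs : |τ * (μ - I2) - I1| ≥ |τ| * (κ/6) - |I1| := by
    have h5 : |τ * (μ - I2)| - |I1| ≤ |τ * (μ - I2) - I1| := abs_sub_abs_le_abs_sub _ _
    have h6 : |τ| * (κ/6) ≤ |τ * (μ - I2)| := by
      rw [abs_mul]
      have : κ/6 ≤ |μ - I2| := by
        have h7 : μ - I2 ≤ -(κ/6) := by
          have := abs_le.1 hμ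
          linarith [this.2]
        calc κ/6 ≤ -(μ - I2) := by linarith
          _ ≤ |μ - I2| := neg_le_abs _
      exact mul_le_mul_of_nonneg_left this (abs_nonneg _)
    linarith
  have heq : -(I1 + τ * I2) + τ * μ = τ * (μ - I2) - I1 := by ring
  rw [heq]
  calc |τ * (μ - I2) - I1| ≥ |τ| * (κ/6) - |I1| := habs
    _ ≥ κ/6 * |τ| - L * Real.sqrt (∫ t in (0:ℝ)..1, ‖g t‖ ^ 2) := by
        rw [mul_comm]; linarith
end
end

section
/- (Step 2 estimate, single particle.) Let n ≥ 1, C > 0, let H : ℝ^{2n} → ℝ be C¹ with ‖∇H(z)‖ ≤ C for all z, let a : ℝ → ℝ be continuous, let v : ℝ → ℝ^{2n} be C¹, and let t₀ ≤ t₁ ≤ t₀ + 1 be real numbers. Then H(v(t₁)) − H(v(t₀)) ≤ C·( ∫_{t₀}^{t₀+1} ‖v'(t) − a(t)·J∇H(v(t))‖² dt )^{1/2}. -/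
open MeasureTheory

noncomputable section

theorem Jmap_continuous (n : ℕ) : Continuous (Jmap n) := by
  refine Continuous.comp (PiLp.continuous_toLp (p := 2) (β := fun _ : Fin n ⊕ Fin n => ℝ)) ?_
  refine continuous_pi fun i => ?_
  cases i with
  | inl j => exact (((continuous_apply _).comp (PiLp.continuous_ofLp 2 _))).neg
  | inr j => exact ((continuous_apply _).comp (PiLp.continuous_ofLp 2 _))

theorem Jmap_orth (n : ℕ) (z : EuclideanSpace ℝ (Fin n ⊕ Fin n)) :
    (inner ℝ z (Jmap n z) : ℝ) = 0 := by
  simp only [PiLp.inner_apply, RCLike.inner_apply, conj_trivial, Fintype.sum_sum_type]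
  simp [Jmap, mul_comm]

/-- Step 2 estimate, single particle: if `‖∇H‖ ≤ C` everywhere, then for any `C¹`
curve `v` and times `t₀ ≤ t₁ ≤ t₀ + 1`, the energy difference is controlled by
the `L²`-distance of `v'` from the rescaled Hamiltonian vector field:
`H(v(t₁)) − H(v(t₀)) ≤ C·(∫_{t₀}^{t₀+1} ‖v'(t) − a(t)·J∇H(v(t))‖² dt)^{1/2}`. -/
theorem step2_single_particle (n : ℕ) (hn : 1 ≤ n) (C : ℝ) (hC : 0 < C)
    (H : EuclideanSpace ℝ (Fin n ⊕ Fin n) → ℝ) (hH : ContDiff ℝ 1 H)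
    (hgrad : ∀ z, ‖gradient H z‖ ≤ C)
    (a : ℝ → ℝ) (ha : Continuous a)
    (v : ℝ → EuclideanSpace ℝ (Fin n ⊕ Fin n)) (hv : ContDiff ℝ 1 v)
    (t₀ t₁ : ℝ) (h₀₁ : t₀ ≤ t₁) (h₁ : t₁ ≤ t₀ + 1) :
    H (v t₁) - H (v t₀) ≤
      C * Real.sqrt (∫ t in t₀..(t₀ + 1),
        ‖deriv v t - a t • Jmap n (gradient H (v t))‖ ^ 2) := by
  set w : ℝ → EuclideanSpace ℝ (Fin n ⊕ Fin n) :=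
    fun t => deriv v t - a t • Jmap n (gradient H (v t)) with hwdef
  have hGc : Continuous fun z => gradient H z :=
    (InnerProductSpace.toDual ℝ _).symm.continuous.comp (hH.continuous_fderiv one_ne_zero)
  have hvc : Continuous v := hv.continuous
  have hdc : Continuous (deriv v) := hv.continuous_deriv le_rfl
  have hwc : Continuous w := hdc.sub (ha.smul ((Jmap_continuous n).comp (hGc.comp hvc)))
  have hfder : ∀ z y, (fderiv ℝ H z) y = (inner ℝ (gradient H z) y : ℝ) := by
    intro z y
    rw [gradient, ← InnerProductSpace.toDual_apply_apply, LinearIsometryEquiv.apply_symm_apply]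
  have hderivH : ∀ t, HasDerivAt (fun s => H (v s))
      (inner ℝ (gradient H (v t)) (deriv v t) : ℝ) t := by
    intro t
    have h1 : HasDerivAt v (deriv v t) t := (hv.differentiable one_ne_zero t).hasDerivAt
    have h2 : HasFDerivAt H (fderiv ℝ H (v t)) (v t) :=
      (hH.differentiable one_ne_zero (v t)).hasFDerivAt
    have h3 := h2.comp_hasDerivAt t h1
    rwa [hfder] at h3
  have hgc : Continuous fun t => (inner ℝ (gradient H (v t)) (deriv v t) : ℝ) :=
    (hGc.comp hvc).inner hdc
  have hFTC : H (v t₁) - H (v t₀)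
      = ∫ t in t₀..t₁, (inner ℝ (gradient H (v t)) (deriv v t) : ℝ) :=
    (intervalIntegral.integral_eq_sub_of_hasDerivAt (fun t _ => hderivH t)
      (hgc.intervalIntegrable _ _)).symm
  have hpt : ∀ t, (inner ℝ (gradient H (v t)) (deriv v t) : ℝ)
      = inner ℝ (gradient H (v t)) (w t) := by
    intro t
    rw [hwdef]
    simp only [inner_sub_right, real_inner_smul_right, Jmap_orth, mul_zero, sub_zero]
  have hbd : ∀ t, (inner ℝ (gradient H (v t)) (deriv v t) : ℝ) ≤ C * ‖w t‖ := by
    intro t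
    rw [hpt t]
    calc (inner ℝ (gradient H (v t)) (w t) : ℝ) ≤ ‖gradient H (v t)‖ * ‖w t‖ :=
          real_inner_le_norm _ _
      _ ≤ C * ‖w t‖ := mul_le_mul_of_nonneg_right (hgrad _) (norm_nonneg _)
  have hCwInt : ∀ s u : ℝ, IntervalIntegrable (fun t => C * ‖w t‖) volume s u :=
    fun s u => (continuous_const.mul hwc.norm).intervalIntegrable _ _
  have hInt1 : (∫ t in t₀..t₁, (inner ℝ (gradient H (v t)) (deriv v t) : ℝ))
      ≤ ∫ t in t₀..t₁, C * ‖w t‖ :=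
    intervalIntegral.integral_mono_on h₀₁ (hgc.intervalIntegrable _ _) (hCwInt _ _)
      (fun t _ => hbd t)
  have hInt2 : (∫ t in t₀..t₁, C * ‖w t‖) ≤ ∫ t in t₀..(t₀ + 1), C * ‖w t‖ := by
    have hadd := intervalIntegral.integral_add_adjacent_intervals
      (hCwInt t₀ t₁) (hCwInt t₁ (t₀ + 1))
    have hnn : 0 ≤ ∫ t in t₁..(t₀ + 1), C * ‖w t‖ :=
      intervalIntegral.integral_nonneg h₁ (fun t _ => mul_nonneg hC.le (norm_nonneg _))
    linarith
  -- Cauchy–Schwarz on [t₀, t₀+1]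
  have hCS : (∫ t in t₀..(t₀ + 1), ‖w t‖) ≤ Real.sqrt (∫ t in t₀..(t₀ + 1), ‖w t‖ ^ 2) := by
    set μ := volume.restrict (Set.Ioc t₀ (t₀ + 1)) with hμ
    haveI : IsFiniteMeasure μ := ⟨by
      simp [hμ, Real.volume_Ioc]⟩
    obtain ⟨B, hB⟩ := (isCompact_Icc (a := t₀) (b := t₀ + 1)).exists_bound_of_continuousOn
      hwc.norm.continuousOn
    have hmem : MemLp (fun t => ‖w t‖) (ENNReal.ofReal 2) μ := by
      refine MemLp.of_bound hwc.norm.aestronglyMeasurable B ?_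
      refine (ae_restrict_iff' measurableSet_Ioc).2 (Filter.Eventually.of_forall fun t ht => ?_)
      simpa using hB t (Set.Ioc_subset_Icc_self ht)
    have hpq : (2 : ℝ).HolderConjugate 2 := Real.HolderConjugate.two_two
    have key := integral_mul_le_Lp_mul_Lq_of_nonneg hpq (μ := μ)
      (f := fun t => ‖w t‖) (g := fun _ => (1 : ℝ))
      (Filter.Eventually.of_forall fun t => norm_nonneg _)
      (Filter.Eventually.of_forall fun t => zero_le_one)
      hmem (memLp_const 1)
    have h1 : (∫ t, ‖w t‖ * 1 ∂μ) = ∫ t, ‖w t‖ ∂μ := by simp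
    have h2 : (∫ t, (1 : ℝ) ^ (2 : ℝ) ∂μ) = 1 := by
      simp [hμ, Real.volume_Ioc]
    have h3 : (∫ t, ‖w t‖ ^ (2 : ℝ) ∂μ) = ∫ t, ‖w t‖ ^ 2 ∂μ := by
      refine integral_congr_ae (Filter.Eventually.of_forall fun t => ?_)
      exact Real.rpow_two _
    rw [h1, h2, h3] at key
    have h4 : (∫ t, ‖w t‖ ^ 2 ∂μ) ^ (1 / (2:ℝ)) = Real.sqrt (∫ t, ‖w t‖ ^ 2 ∂μ) :=
      (Real.sqrt_eq_rpow _).symm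
    rw [h4, Real.one_rpow, mul_one] at key
    rw [intervalIntegral.integral_of_le (by linarith : t₀ ≤ t₀ + 1),
      intervalIntegral.integral_of_le (by linarith : t₀ ≤ t₀ + 1)]
    exact key
  calc H (v t₁) - H (v t₀)
      = ∫ t in t₀..t₁, (inner ℝ (gradient H (v t)) (deriv v t) : ℝ) := hFTC
    _ ≤ ∫ t in t₀..t₁, C * ‖w t‖ := hInt1
    _ ≤ ∫ t in t₀..(t₀ + 1), C * ‖w t‖ := hInt2
    _ = C * ∫ t in t₀..(t₀ + 1), ‖w t‖ := intervalIntegral.integral_const_mul _ _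
    _ ≤ C * Real.sqrt (∫ t in t₀..(t₀ + 1), ‖w t‖ ^ 2) :=
        mul_le_mul_of_nonneg_left hCS hC.le
end
end
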